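/- In A = K[t, t⁻¹, (t−1)⁻¹] with t' = 1 − t⁻¹ and t'' = (1−t)⁻¹, the relation ⟨t,t⁻¹⟩ + ⟨t',(t')⁻¹⟩ + ⟨t'',(t'')⁻¹⟩ = 0 holds in ⟨A,A⟩ = (A⊗A)/S. -/

import Mathlib

open TensorProduct Polynomial

noncomputable section

/-- `A = K[t, t⁻¹, (t-1)⁻¹]`, the localization of `K[t]` at `t` and `t - 1`. -/
abbrev LoopAlgCoeff (K : Type*) [Field K] :=
  Localization (Submonoid.closure {(X : K[X]), X - 1})

/-- The element `t` of `A`. -/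
def tElt (K : Type*) [Field K] : LoopAlgCoeff K :=
  algebraMap K[X] (LoopAlgCoeff K) X

/-- The subspace `S ⊆ A ⊗ A` spanned by all `a⊗b + b⊗a` and `ab⊗c + bc⊗a + ca⊗b`. -/
def cycRel (K : Type*) [Field K] (A : Type*) [CommRing A] [Algebra K A] :
    Submodule K (A ⊗[K] A) :=
  Submodule.span K
    ({x | ∃ a b : A, x = a ⊗ₜ b + b ⊗ₜ a} ∪
     {x | ∃ a b c : A, x = (a*b) ⊗ₜ c + (b*c) ⊗ₜ a + (c*a) ⊗ₜ b})

/-- `⟨A,A⟩ = (A ⊗ A)/S`. -/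
abbrev CycPair (K : Type*) [Field K] (A : Type*) [CommRing A] [Algebra K A] :=
  (A ⊗[K] A) ⧸ cycRel K A

/-- `⟨a,b⟩`, the class of `a ⊗ b` in `⟨A,A⟩`. -/
def cycPair (K : Type*) [Field K] {A : Type*} [CommRing A] [Algebra K A] (a b : A) :
    CycPair K A := Submodule.Quotient.mk (a ⊗ₜ b)

lemma ring_inverse_eq_of_mul_eq_one {A : Type*} [CommRing A] {a b : A}
    (h : a * b = 1) : Ring.inverse a = b := by
  obtain ⟨u, rfl⟩ := IsUnit.of_mul_eq_one (a := a) b h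
  rw [Ring.inverse_unit]
  calc (↑u⁻¹ : A) = ↑u⁻¹ * (↑u * b) := by rw [h, mul_one]
  _ = b := by rw [← mul_assoc, u.inv_mul, one_mul]

lemma cycPair_symm (K : Type*) [Field K] {A : Type*} [CommRing A] [Algebra K A]
    (a b : A) : cycPair K a b = - cycPair K b a := by
  rw [eq_neg_iff_add_eq_zero]
  show Submodule.Quotient.mk _ + Submodule.Quotient.mk _ = 0
  rw [← Submodule.Quotient.mk_add, Submodule.Quotient.mk_eq_zero]
  exact Submodule.subset_span (Or.inl ⟨a, b, rfl⟩)

lemma cycPair_cyc (K : Type*) [Field K] {A : Type*} [CommRing A] [Algebra K A]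
    (a b c : A) : cycPair K (a*b) c + cycPair K (b*c) a + cycPair K (c*a) b = 0 := by
  show Submodule.Quotient.mk _ + Submodule.Quotient.mk _ + Submodule.Quotient.mk _ = 0
  rw [← Submodule.Quotient.mk_add, ← Submodule.Quotient.mk_add,
    Submodule.Quotient.mk_eq_zero]
  exact Submodule.subset_span (Or.inr ⟨a, b, c, rfl⟩)

lemma cycPair_neg_right (K : Type*) [Field K] {A : Type*} [CommRing A] [Algebra K A]
    (a b : A) : cycPair K a (-b) = - cycPair K a b := by
  show Submodule.Quotient.mk _ = - Submodule.Quotient.mk _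
  rw [← Submodule.Quotient.mk_neg, tmul_neg]

/-- In `A = K[t, t⁻¹, (t-1)⁻¹]` with `t' = 1 - t⁻¹` and `t'' = (1-t)⁻¹`, the relation
`⟨t,t⁻¹⟩ + ⟨t',(t')⁻¹⟩ + ⟨t'',(t'')⁻¹⟩ = 0` holds in `⟨A,A⟩ = (A⊗A)/S`. -/
theorem cycPair_sum_zero (K : Type*) [Field K] [CharZero K] :
    let t : LoopAlgCoeff K := tElt K
    let t' : LoopAlgCoeff K := 1 - Ring.inverse t
    let t'' : LoopAlgCoeff K := Ring.inverse (1 - t)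
    cycPair K t (Ring.inverse t) + cycPair K t' (Ring.inverse t') +
      cycPair K t'' (Ring.inverse t'') = 0 := by
  intro t t' t''
  -- `t` is a unit
  have hXmem : (X : K[X]) ∈ Submonoid.closure {(X : K[X]), X - 1} :=
    Submonoid.subset_closure (by simp)
  have hX1mem : (X - 1 : K[X]) ∈ Submonoid.closure {(X : K[X]), X - 1} :=
    Submonoid.subset_closure (by simp)
  have htu : IsUnit t :=
    IsLocalization.map_units (M := Submonoid.closure {(X : K[X]), X - 1})
      (Localization (Submonoid.closure {(X : K[X]), X - 1})) ⟨X, hXmem⟩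
  have ht1u : IsUnit (t - 1) := by
    have : (t - 1 : LoopAlgCoeff K) = algebraMap K[X] (LoopAlgCoeff K) (X - 1) := by
      rw [map_sub, map_one]; rfl
    rw [this]
    exact IsLocalization.map_units (M := Submonoid.closure {(X : K[X]), X - 1})
      (Localization (Submonoid.closure {(X : K[X]), X - 1})) ⟨X - 1, hX1mem⟩
  set u : LoopAlgCoeff K := Ring.inverse t with hu
  set v : LoopAlgCoeff K := Ring.inverse (1 - t) with hv
  have ht : t * u = 1 := Ring.mul_inverse_cancel t htu
  have h1t : (1 - t) * v = 1 := by
    have : IsUnit (1 - t) := by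
      have := ht1u.neg
      simpa [neg_sub] using this
    exact Ring.mul_inverse_cancel _ this
  -- the three inverse identities
  have e1 : u = -(t' * t'') := by
    show u = -((1 - u) * v)
    linear_combination (-v) * ht + (-u) * h1t
  have e2 : Ring.inverse t' = -(t'' * t) := by
    apply ring_inverse_eq_of_mul_eq_one
    show (1 - u) * -(v * t) = 1
    linear_combination v * ht + h1t
  have e3 : Ring.inverse t'' = -(t * t') := by
    apply ring_inverse_eq_of_mul_eq_one
    show v * -(t * (1 - u)) = 1
    linear_combination v * ht + h1t
  have ht'eq : t' = 1 - u := rfl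
  have ht''eq : t'' = v := rfl
  calc cycPair K t u + cycPair K t' (Ring.inverse t') + cycPair K t'' (Ring.inverse t'')
      = cycPair K t (-(t' * t'')) + cycPair K t' (-(t'' * t)) +
        cycPair K t'' (-(t * t')) := by rw [e1, e2, e3]
    _ = -cycPair K t (t' * t'') + -cycPair K t' (t'' * t) + -cycPair K t'' (t * t') := by
        rw [cycPair_neg_right, cycPair_neg_right, cycPair_neg_right]
    _ = cycPair K (t' * t'') t + cycPair K (t'' * t) t' + cycPair K (t * t') t'' := by
        rw [cycPair_symm K (t' * t'') t, cycPair_symm K (t'' * t) t',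
          cycPair_symm K (t * t') t'']
        try abel
    _ = 0 := cycPair_cyc K t' t'' t
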